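/- Let U be an open subset of a finite-dimensional real vector space E, g a smooth possibly degenerate metric on U, and D a Koszul derivative for g. Then the Riemann curvature tensor R(X,Y,Z,T) := g(D_X D_Y Z − D_Y D_X Z − D_{[X,Y]} Z, T) is antisymmetric in its last two arguments: R(X,Y,Z,T) = −R(X,Y,T,Z) for all smooth vector fields X, Y, Z, T. -/

import Mathlib

variable {E : Type*} [NormedAddCommGroup E] [NormedSpace ℝ E] [FiniteDimensional ℝ E]

/-- The action `(Xf)(p) = df_p(X(p))` of a vector field on a function. -/
noncomputable def vAct (X : E → E) (f : E → ℝ) : E → ℝ := fun p => fderiv ℝ f p (X p)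

/-- The Lie bracket `[X,Y](p) = dY_p(X(p)) − dX_p(Y(p))` of vector fields. -/
noncomputable def vBracket (X Y : E → E) : E → E :=
  fun p => fderiv ℝ Y p (X p) - fderiv ℝ X p (Y p)

/-- The function `p ↦ g_p(Y(p), Z(p))`. -/
noncomputable def gFun (g : E → E →L[ℝ] E →L[ℝ] ℝ) (Y Z : E → E) : E → ℝ := fun p => g p (Y p) (Z p)

/-- The Koszul form
`K(X,Y,Z) := ½{X g(Y,Z) + Y g(Z,X) − Z g(X,Y) − g(X,[Y,Z]) + g(Y,[Z,X]) + g(Z,[X,Y])}`. -/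
noncomputable def koszul (g : E → E →L[ℝ] E →L[ℝ] ℝ) (X Y Z : E → E) : E → ℝ := fun p =>
  (1/2 : ℝ) * (vAct X (gFun g Y Z) p + vAct Y (gFun g Z X) p - vAct Z (gFun g X Y) p
    - gFun g X (vBracket Y Z) p + gFun g Y (vBracket Z X) p + gFun g Z (vBracket X Y) p)

/-- The Riemann curvature tensor of a Koszul derivative `D`:
`R(X,Y,Z,T) := g(D_X D_Y Z − D_Y D_X Z − D_[X,Y] Z, T)`. -/
noncomputable def riem (g : E → E →L[ℝ] E →L[ℝ] ℝ) (D : (E → E) → (E → E) → (E → E))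
    (X Y Z T : E → E) : E → ℝ := fun p =>
  g p (D X (D Y Z) p - D Y (D X Z) p - D (vBracket X Y) Z p) (T p)

set_option linter.unusedSectionVars false
section Aux

variable {E : Type*} [NormedAddCommGroup E] [NormedSpace ℝ E] [FiniteDimensional ℝ E]

lemma gFun_symm' (g : E → E →L[ℝ] E →L[ℝ] ℝ) (hsymm : ∀ p : E, ∀ u v : E, g p u v = g p v u)
    (A B : E → E) : gFun g A B = gFun g B A := by
  funext q; exact hsymm q _ _

lemma gFun_bracket_cancel (g : E → E →L[ℝ] E →L[ℝ] ℝ) (A B C : E → E) (p : E) :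
    gFun g A (vBracket B C) p + gFun g A (vBracket C B) p = 0 := by
  simp only [gFun, vBracket]
  have : fderiv ℝ B p (C p) - fderiv ℝ C p (B p)
      = -(fderiv ℝ C p (B p) - fderiv ℝ B p (C p)) := by abel
  rw [this, map_neg]
  ring

/-- Pure algebra: `K(W,A,B) + K(W,B,A) = W g(A,B)`. -/
lemma koszul_add_symm (g : E → E →L[ℝ] E →L[ℝ] ℝ)
    (hsymm : ∀ p : E, ∀ u v : E, g p u v = g p v u) (W A B : E → E) (p : E) :
    koszul g W A B p + koszul g W B A p = vAct W (gFun g A B) p := by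
  simp only [koszul]
  rw [gFun_symm' g hsymm B A, gFun_symm' g hsymm B W, gFun_symm' g hsymm A W]
  have h1 := gFun_bracket_cancel g W A B p
  have h2 := gFun_bracket_cancel g A B W p
  have h3 := gFun_bracket_cancel g B W A p
  linarith

lemma gFun_smooth {U : Set E} {g : E → E →L[ℝ] E →L[ℝ] ℝ} (hg : ContDiffOn ℝ (⊤ : ℕ∞) g U)
    {A B : E → E} (hA : ContDiffOn ℝ (⊤ : ℕ∞) A U) (hB : ContDiffOn ℝ (⊤ : ℕ∞) B U) :
    ContDiffOn ℝ (⊤ : ℕ∞) (gFun g A B) U :=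
  (hg.clm_apply hA).clm_apply hB

lemma vBracket_smooth {U : Set E} (hU : IsOpen U) {A B : E → E}
    (hA : ContDiffOn ℝ (⊤ : ℕ∞) A U) (hB : ContDiffOn ℝ (⊤ : ℕ∞) B U) :
    ContDiffOn ℝ (⊤ : ℕ∞) (vBracket A B) U := by
  have hA' : ContDiffOn ℝ (⊤ : ℕ∞) (fderiv ℝ A) U :=
    hA.fderiv_of_isOpen hU (by exact_mod_cast le_top)
  have hB' : ContDiffOn ℝ (⊤ : ℕ∞) (fderiv ℝ B) U :=
    hB.fderiv_of_isOpen hU (by exact_mod_cast le_top)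
  exact (hB'.clm_apply hA).sub (hA'.clm_apply hB)

lemma vAct_congr {U : Set E} (hU : IsOpen U) {p : E} (hp : p ∈ U) (W : E → E) {f f' : E → ℝ}
    (h : ∀ q ∈ U, f q = f' q) : vAct W f p = vAct W f' p := by
  have : f =ᶠ[nhds p] f' := by
    filter_upwards [hU.mem_nhds hp] with q hq using h q hq
  simp only [vAct, this.fderiv_eq]

lemma vAct_add {W : E → E} {f1 f2 : E → ℝ} {p : E} (h1 : DifferentiableAt ℝ f1 p)
    (h2 : DifferentiableAt ℝ f2 p) :
    vAct W (fun q => f1 q + f2 q) p = vAct W f1 p + vAct W f2 p := by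
  simp only [vAct, fderiv_fun_add h1 h2, ContinuousLinearMap.add_apply]

/-- `[X,Y] f = X (Y f) − Y (X f)` for smooth `f` on an open set. -/
lemma vAct_bracket {U : Set E} (hU : IsOpen U) {p : E} (hp : p ∈ U) {X Y : E → E} {f : E → ℝ}
    (hX : ContDiffOn ℝ (⊤ : ℕ∞) X U) (hY : ContDiffOn ℝ (⊤ : ℕ∞) Y U)
    (hf : ContDiffOn ℝ (⊤ : ℕ∞) f U) :
    vAct X (vAct Y f) p - vAct Y (vAct X f) p = vAct (vBracket X Y) f p := by
  have hfp : ContDiffAt ℝ (⊤ : ℕ∞) f p := hf.contDiffAt (hU.mem_nhds hp)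
  have hXp : DifferentiableAt ℝ X p :=
    (hX.contDiffAt (hU.mem_nhds hp)).differentiableAt (by simp)
  have hYp : DifferentiableAt ℝ Y p :=
    (hY.contDiffAt (hU.mem_nhds hp)).differentiableAt (by simp)
  have hdf : DifferentiableAt ℝ (fderiv ℝ f) p :=
    (hfp.fderiv_right (m := (⊤ : ℕ∞)) (by exact_mod_cast le_top)).differentiableAt
      (by simp)
  have hsymm2 := hfp.isSymmSndFDerivAt (by rw [minSmoothness_of_isRCLikeNormedField]; exact WithTop.coe_le_coe.mpr (le_top : (2 : ℕ∞) ≤ ⊤))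
  have e1 : vAct X (vAct Y f) p
      = fderiv ℝ f p (fderiv ℝ Y p (X p)) + fderiv ℝ (fderiv ℝ f) p (X p) (Y p) := by
    have hv : vAct Y f = fun q => (fderiv ℝ f q) (Y q) := rfl
    simp only [vAct, hv]
    rw [fderiv_clm_apply hdf hYp]
    simp [ContinuousLinearMap.add_apply, ContinuousLinearMap.comp_apply,
      ContinuousLinearMap.flip_apply]
  have e2 : vAct Y (vAct X f) p
      = fderiv ℝ f p (fderiv ℝ X p (Y p)) + fderiv ℝ (fderiv ℝ f) p (Y p) (X p) := by
    have hv : vAct X f = fun q => (fderiv ℝ f q) (X q) := rfl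
    simp only [vAct, hv]
    rw [fderiv_clm_apply hdf hXp]
    simp [ContinuousLinearMap.add_apply, ContinuousLinearMap.comp_apply,
      ContinuousLinearMap.flip_apply]
  rw [e1, e2, hsymm2 (X p) (Y p)]
  simp only [vAct, vBracket, map_sub]
  ring

end Aux
/-- the Riemann curvature tensor is antisymmetric in its last two
arguments: `R(X,Y,Z,T) = −R(X,Y,T,Z)` on `U`. -/
theorem riem_antisymm_last_pair
    (U : Set E) (hU : IsOpen U)
    (g : E → E →L[ℝ] E →L[ℝ] ℝ) (hg : ContDiffOn ℝ (⊤ : ℕ∞) g U)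
    (hsymm : ∀ p : E, ∀ u v : E, g p u v = g p v u)
    (D : (E → E) → (E → E) → (E → E))
    (hDsmooth : ∀ X Y : E → E, ContDiffOn ℝ (⊤ : ℕ∞) X U → ContDiffOn ℝ (⊤ : ℕ∞) Y U →
      ContDiffOn ℝ (⊤ : ℕ∞) (D X Y) U)
    (hDK : ∀ X Y Z : E → E, ContDiffOn ℝ (⊤ : ℕ∞) X U → ContDiffOn ℝ (⊤ : ℕ∞) Y U →
      ContDiffOn ℝ (⊤ : ℕ∞) Z U → ∀ p ∈ U, g p (D X Y p) (Z p) = koszul g X Y Z p)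
    (X Y Z T : E → E) (hX : ContDiffOn ℝ (⊤ : ℕ∞) X U) (hY : ContDiffOn ℝ (⊤ : ℕ∞) Y U)
    (hZ : ContDiffOn ℝ (⊤ : ℕ∞) Z U) (hT : ContDiffOn ℝ (⊤ : ℕ∞) T U) :
    ∀ p ∈ U, riem g D X Y Z T p = -riem g D X Y T Z p := by
  -- compatibility: W g(A,B) = g(D_W A, B) + g(A, D_W B) on U
  have compat : ∀ W A B : E → E, ContDiffOn ℝ (⊤ : ℕ∞) W U → ContDiffOn ℝ (⊤ : ℕ∞) A U →
      ContDiffOn ℝ (⊤ : ℕ∞) B U → ∀ q ∈ U,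
      vAct W (gFun g A B) q = g q (D W A q) (B q) + g q (A q) (D W B q) := by
    intro W A B hW hA hB q hq
    rw [hsymm q (A q) (D W B q), hDK W A B hW hA hB q hq, hDK W B A hW hB hA q hq]
    exact (koszul_add_symm g hsymm W A B q).symm
  intro p hp
  have hXY := vBracket_smooth hU hX hY
  have hDYZ := hDsmooth Y Z hY hZ
  have hDXZ := hDsmooth X Z hX hZ
  have hDYT := hDsmooth Y T hY hT
  have hDXT := hDsmooth X T hX hT
  have diffAt : ∀ {A B : E → E}, ContDiffOn ℝ (⊤ : ℕ∞) A U → ContDiffOn ℝ (⊤ : ℕ∞) B U →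
      DifferentiableAt ℝ (gFun g A B) p := fun hA hB =>
    ((gFun_smooth hg hA hB).contDiffAt (hU.mem_nhds hp)).differentiableAt
      (by simp)
  -- X (Y g(Z,T)) at p
  have key : ∀ (W V : E → E), ContDiffOn ℝ (⊤ : ℕ∞) W U → ContDiffOn ℝ (⊤ : ℕ∞) V U →
      vAct W (vAct V (gFun g Z T)) p
        = g p (D W (D V Z) p) (T p) + g p (D V Z p) (D W T p)
          + (g p (D W Z p) (D V T p) + g p (Z p) (D W (D V T) p)) := by
    intro W V hW hV
    have hDVZ := hDsmooth V Z hV hZ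
    have hDVT := hDsmooth V T hV hT
    have e : vAct W (vAct V (gFun g Z T)) p
        = vAct W (fun q => gFun g (D V Z) T q + gFun g Z (D V T) q) p :=
      vAct_congr hU hp W (fun q hq => compat V Z T hV hZ hT q hq)
    rw [e, vAct_add (diffAt hDVZ hT) (diffAt hZ hDVT),
      compat W (D V Z) T hW hDVZ hT p hp, compat W Z (D V T) hW hZ hDVT p hp]
  have k1 := key X Y hX hY
  have k2 := key Y X hY hX
  have k3 := compat (vBracket X Y) Z T hXY hZ hT p hp
  have kb := vAct_bracket hU hp hX hY (gFun_smooth hg hZ hT)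
  -- turn g p u (w) into g p w (u) for the second slots
  have s1 := hsymm p (Z p) (D X (D Y Z) p)
  simp only [riem, map_sub, ContinuousLinearMap.sub_apply]
  have h1 : g p (D X (D Y T) p) (Z p) = g p (Z p) (D X (D Y T) p) := hsymm p _ _
  have h2 : g p (D Y (D X T) p) (Z p) = g p (Z p) (D Y (D X T) p) := hsymm p _ _
  have h3 : g p (D (vBracket X Y) T p) (Z p) = g p (Z p) (D (vBracket X Y) T p) := hsymm p _ _
  have h4 : g p (D Y Z p) (D X T p) = g p (D X T p) (D Y Z p) := hsymm p _ _
  have h5 : g p (D X Z p) (D Y T p) = g p (D Y T p) (D X Z p) := hsymm p _ _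
  linarith [k1, k2, k3, kb]
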